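/- Let h be a substitution (or morphism) on an alphabet Σ such that: (1) no image of a letter occurs properly inside any image of a two-letter word, (2) no image of a letter is a proper prefix of an image of another letter (hence h is injective on letters), and (3) images of distinct letters end in distinct letters. If moreover no image of a square-free word of length at most 8 contains a square of period at most 52, and every image of a letter has length at most 18, then h is square-free. -/

import Mathlib

def SqFreeWord {α : Type*} (w : List α) : Prop :=
  ∀ x : List α, x ≠ [] → ¬ (x ++ x) <:+: w

namespace SqAux
open List

variable {α β : Type*} {h : α → Set (List α)}

/-- cumulative length of the first `k` blocks -/
def S (ws : List (List α)) (k : ℕ) : ℕ := ((ws.take k).flatten).length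

lemma S_zero (ws : List (List α)) : S ws 0 = 0 := rfl

lemma S_succ (ws : List (List α)) (k : ℕ) {B : List α} (hB : ws[k]? = some B) :
    S ws (k+1) = S ws k + B.length := by
  have hk : k < ws.length := by
    by_contra hk
    simp [List.getElem?_eq_none (le_of_not_gt hk)] at hB
  unfold S
  rw [List.take_succ, hB]
  simp

lemma S_top (ws : List (List α)) {k : ℕ} (hk : ws.length ≤ k) :
    S ws k = ws.flatten.length := by
  unfold S
  rw [List.take_of_length_le hk]

lemma S_mono (ws : List (List α)) {k m : ℕ} (hkm : k ≤ m) : S ws k ≤ S ws m := by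
  have h1 : (ws.take k).flatten <+: (ws.take m).flatten := by
    have : ws.take k <+: ws.take m := by
      rw [List.prefix_take_iff]
      exact ⟨List.take_prefix _ _, by simp; omega⟩
    obtain ⟨z, hz⟩ := this
    exact ⟨z.flatten, by rw [← hz]; simp⟩
  exact h1.length_le

lemma drop_S (ws : List (List α)) (k : ℕ) :
    ws.flatten.drop (S ws k) = (ws.drop k).flatten := by
  have : ws.flatten = (ws.take k).flatten ++ (ws.drop k).flatten := by
    rw [← List.flatten_append, List.take_append_drop]
  rw [this, S, List.drop_left]

lemma S_strict (ws : List (List α)) (hne : ∀ u ∈ ws, u ≠ []) {k m : ℕ}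
    (hkm : k < m) (hm : m ≤ ws.length) : S ws k < S ws m := by
  have hk : k < ws.length := lt_of_lt_of_le hkm hm
  have hB : ws[k]? = some (ws[k]'hk) := List.getElem?_eq_getElem hk
  have h1 : S ws (k+1) = S ws k + (ws[k]'hk).length := S_succ ws k hB
  have h2 : (ws[k]'hk).length ≠ 0 := by
    simpa using hne _ (List.getElem_mem hk)
  have := S_mono ws (show k + 1 ≤ m from hkm)
  omega

lemma S_inj (ws : List (List α)) (hne : ∀ u ∈ ws, u ≠ []) {k m : ℕ}
    (hk : k ≤ ws.length) (hm : m ≤ ws.length) (he : S ws k = S ws m) : k = m := by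
  rcases lt_trichotomy k m with hl | hl | hl
  · exact absurd he (Nat.ne_of_lt (S_strict ws hne hl hm))
  · exact hl
  · exact absurd he.symm (Nat.ne_of_lt (S_strict ws hne hl hk))

lemma block_occ (ws : List (List α)) {k : ℕ} {B : List α} (hB : ws[k]? = some B) :
    B <+: ws.flatten.drop (S ws k) := by
  have hk : k < ws.length := by
    by_contra hk
    simp [List.getElem?_eq_none (le_of_not_gt hk)] at hB
  rw [drop_S, List.drop_eq_getElem_cons hk, List.flatten_cons]
  have : ws[k] = B := by simpa [List.getElem?_eq_getElem hk] using hB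
  rw [this]
  exact List.prefix_append _ _

lemma sqfree_of_infix {w u : List α} (hw : SqFreeWord w) (hu : u <:+: w) : SqFreeWord u :=
  fun x hx hxx => hw x hx (hxx.trans hu)

lemma getLast?_drop_of_lt {l : List α} {j : ℕ} (hj : j < l.length) :
    (l.drop j).getLast? = l.getLast? := by
  rw [List.getLast?_drop, if_neg (by omega)]


lemma rigid_aux
    (h1 : ∀ (a b c : α) (u v w : List α), u ∈ h a → v ∈ h b → w ∈ h c →
      ∀ x y : List α, x ≠ [] → y ≠ [] → u ++ v ≠ x ++ w ++ y)
    (h3 : ∀ (a b : α) (u v : List α), a ≠ b → u ∈ h a → v ∈ h b →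
      u.getLast? ≠ v.getLast?)
    {c : α} {B : List α} (hB : B ∈ h c) (hBne : B ≠ []) :
    ∀ (w : List α) (ws : List (List α)), List.Forall₂ (fun a u => u ∈ h a) w ws →
      (∀ u ∈ ws, u ≠ []) → ∀ t r, ws.flatten = t ++ B ++ r →
      ∃ (w1 w2 : List α) (ws1 ws2 : List (List α)),
        w = w1 ++ c :: w2 ∧ ws = ws1 ++ B :: ws2 ∧ w1.length = ws1.length ∧
        t = ws1.flatten := by
  intro w ws hf
  induction hf with
  | nil =>
      intro _ t r habs
      exfalso
      apply hBne
      have := congrArg List.length habs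
      simp at this
      exact List.eq_nil_of_length_eq_zero (by omega)
  | @cons a v w' ws' hv hf' ih =>
      intro hne t r heq
      have hvne : v ≠ [] := hne v (by simp)
      have hne' : ∀ u ∈ ws', u ≠ [] := fun u hu => hne u (by simp [hu])
      rw [List.flatten_cons] at heq
      by_cases hlen : v.length ≤ t.length
      · -- v is a prefix of t; recurse
        have hvt : v <+: t :=
          List.prefix_of_prefix_length_le ⟨ws'.flatten, heq⟩
            ⟨B ++ r, by simp [List.append_assoc]⟩ hlen
        obtain ⟨t', rfl⟩ := hvt
        have heq' : ws'.flatten = t' ++ B ++ r := by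
          apply List.append_cancel_left (as := v)
          rw [heq]; simp [List.append_assoc]
        obtain ⟨w1, w2, ws1, ws2, hw, hws, hl, ht⟩ := ih hne' t' r heq'
        exact ⟨a :: w1, w2, v :: ws1, ws2, by simp [hw], by simp [hws],
          by simp [hl], by simp [ht]⟩
      · push_neg at hlen
        have ht : t = [] := by
          by_contra htne
          by_cases hc : t.length + B.length ≤ v.length
          · -- t ++ B is a prefix of v
            have hvB : t ++ B <+: v :=
              List.prefix_of_prefix_length_le ⟨r, heq.symm⟩
                (List.prefix_append _ _) (by simpa using hc)
            obtain ⟨y', hy'⟩ := hvB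
            exact h1 a a c v v B hv hv hB t (y' ++ v) htne
              (fun hq => hvne (List.append_eq_nil_iff.mp hq).2)
              (by rw [← hy']; simp [List.append_assoc])
          · push_neg at hc
            have hvtB : v <+: t ++ B :=
              List.prefix_of_prefix_length_le
                (show v <+: (t ++ B) ++ r from ⟨ws'.flatten, by rw [heq]⟩)
                (List.prefix_append _ _) (by simp; omega)
            obtain ⟨z, hz⟩ := hvtB
            have hBd : v.drop t.length ++ z = B := by
              have := congrArg (List.drop t.length) hz
              rwa [List.drop_append, Nat.sub_eq_zero_of_le (le_of_lt hlen),
                List.drop_zero, List.drop_left] at this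
            have hfl : ws'.flatten = z ++ r := by
              apply List.append_cancel_left (as := v)
              rw [heq, ← hz]; simp [List.append_assoc]
            have hzne : z ≠ [] := by
              intro hz0
              rw [hz0] at hz
              have := congrArg List.length hz
              simp at this
              omega
            cases hf' with
            | nil => simp [hzne] at hfl
            | @cons b v' w'' ws'' hv' hf'' =>
                rw [List.flatten_cons] at hfl
                have hv'ne : v' ≠ [] := hne' v' (by simp)
                by_cases hvz : v'.length ≤ z.length
                · -- v' is a prefix of z : v' inside B
                  have : v' <+: z :=
                    List.prefix_of_prefix_length_le ⟨ws''.flatten, hfl⟩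
                      (List.prefix_append _ _) hvz
                  obtain ⟨z', hz'⟩ := this
                  have hBe : B = v.drop t.length ++ (v' ++ z') := by
                    rw [← hz'] at hBd; exact hBd.symm
                  apply h1 c c b B B v' hB hB hv' (v.drop t.length) (z' ++ B)
                    (by intro h0; have := congrArg List.length h0; simp at this; omega)
                    (fun hq => hBne (List.append_eq_nil_iff.mp hq).2)
                  nth_rewrite 1 [hBe]
                  simp [List.append_assoc]
                · push_neg at hvz
                  have : z <+: v' :=
                    List.prefix_of_prefix_length_le
                      (show z <+: z ++ r from List.prefix_append _ _)
                      (show v' <+: z ++ r from ⟨ws''.flatten, hfl⟩) (le_of_lt hvz)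
                  obtain ⟨y', hy'⟩ := this
                  have hy'ne : y' ≠ [] := by
                    intro h0
                    rw [h0] at hy'
                    have := congrArg List.length hy'
                    simp at this
                    omega
                  apply h1 a b c v v' B hv hv' hB t y' htne hy'ne
                  rw [← hy', ← hz]
                  simp [List.append_assoc]
        subst ht
        simp only [List.nil_append] at heq
        rcases lt_trichotomy B.length v.length with hbv | hbv | hbv
        · -- B proper prefix of v
          have hBv : B <+: v :=
            List.prefix_of_prefix_length_le ⟨r, heq.symm⟩ (List.prefix_append _ _)
              (le_of_lt hbv)
          obtain ⟨y', hy'⟩ := hBv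
          have hy'ne : y' ≠ [] := by
            intro h0
            rw [h0] at hy'
            have := congrArg List.length hy'
            simp at this
            omega
          exact absurd (by rw [← hy']; simp [List.append_assoc] :
              B ++ v = B ++ B ++ y')
            (h1 c a c B v B hB hv hB B y' hBne hy'ne)
        · -- B = v
          have hBv : B = v :=
            (List.prefix_of_prefix_length_le ⟨r, heq.symm⟩ (List.prefix_append _ _)
              (le_of_eq hbv)).eq_of_length hbv
          have hac : a = c := by
            by_contra hac
            exact h3 c a B v (Ne.symm hac) hB hv (by rw [hBv])
          refine ⟨[], w', [], ws', by simp [hac], by simp [hBv], rfl, rfl⟩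
        · -- v proper prefix of B
          have hvB : v <+: B :=
            List.prefix_of_prefix_length_le ⟨ws'.flatten, heq⟩ (List.prefix_append _ _)
              (le_of_lt hbv)
          obtain ⟨B', hB'⟩ := hvB
          have hB'ne : B' ≠ [] := by
            intro h0
            rw [h0] at hB'
            have := congrArg List.length hB'
            simp at this
            omega
          exact absurd (by rw [← hB']; simp [List.append_assoc] :
              B ++ B = B ++ v ++ B')
            (h1 c c a B B v hB hB hv B B' hBne hB'ne)

lemma rigid
    (h1 : ∀ (a b c : α) (u v w : List α), u ∈ h a → v ∈ h b → w ∈ h c →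
      ∀ x y : List α, x ≠ [] → y ≠ [] → u ++ v ≠ x ++ w ++ y)
    (h3 : ∀ (a b : α) (u v : List α), a ≠ b → u ∈ h a → v ∈ h b →
      u.getLast? ≠ v.getLast?)
    {w : List α} {ws : List (List α)}
    (hf : List.Forall₂ (fun a u => u ∈ h a) w ws) (hne : ∀ u ∈ ws, u ≠ [])
    {c : α} {B : List α} (hB : B ∈ h c) (hBne : B ≠ []) {q : ℕ}
    (hocc : B <+: ws.flatten.drop q) :
    ∃ m, m < ws.length ∧ S ws m = q ∧ ws[m]? = some B ∧ w[m]? = some c := by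
  obtain ⟨z, hz⟩ := hocc
  have hq : q ≤ ws.flatten.length := by
    by_contra hq
    push_neg at hq
    rw [List.drop_eq_nil_of_le (le_of_lt hq)] at hz
    exact hBne (List.append_eq_nil_iff.mp hz).1
  have hsplit : ws.flatten = ws.flatten.take q ++ B ++ z := by
    calc ws.flatten = ws.flatten.take q ++ ws.flatten.drop q :=
          (List.take_append_drop _ _).symm
    _ = ws.flatten.take q ++ (B ++ z) := by rw [hz]
    _ = ws.flatten.take q ++ B ++ z := by simp [List.append_assoc]
  obtain ⟨w1, w2, ws1, ws2, hw, hws, hlen, ht⟩ :=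
    rigid_aux h1 h3 hB hBne w ws hf hne _ z hsplit
  have hm : ws1.length < ws.length := by
    rw [hws]
    simp [List.length_append]
  refine ⟨ws1.length, hm, ?_, ?_, ?_⟩
  · have h2 : S ws ws1.length = ws1.flatten.length := by
      unfold S
      rw [hws, List.take_left]
    rw [h2, ← ht, List.length_take]
    exact Nat.min_eq_left hq
  · rw [hws, List.getElem?_append_right (Nat.le_refl _)]
    simp
  · rw [hw, List.getElem?_append_right (le_of_eq hlen)]
    simp [hlen]

lemma not_sqfree_of_periodic {w : List α} {i d : ℕ} (hd : 1 ≤ d)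
    (hbound : i + 2*d ≤ w.length)
    (heq : ∀ s < d, w[i + s]? = w[i + d + s]?) : ¬ SqFreeWord w := by
  intro hs
  have hzlen : ((w.drop i).take d).length = d := by
    simp only [List.length_take, List.length_drop]
    omega
  have hzne : (w.drop i).take d ≠ [] := by
    intro h0
    rw [h0] at hzlen
    simp at hzlen
    omega
  apply hs _ hzne
  have hmain : (w.drop i).take (2*d) = (w.drop i).take d ++ (w.drop i).take d := by
    apply List.ext_getElem?
    intro j
    rw [List.getElem?_take, List.getElem?_drop]
    by_cases hj1 : j < d
    · rw [if_pos (by omega)]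
      rw [List.getElem?_append_left (by rw [hzlen]; omega)]
      rw [List.getElem?_take, if_pos hj1, List.getElem?_drop]
    · by_cases hj2 : j < 2*d
      · rw [if_pos hj2]
        rw [List.getElem?_append_right (by rw [hzlen]; omega)]
        rw [List.getElem?_take, hzlen, if_pos (by omega), List.getElem?_drop]
        rw [heq (j - d) (by omega)]
        congr 1
        omega
      · rw [if_neg hj2, List.getElem?_eq_none]
        simp only [List.length_append, hzlen]
        omega
  rw [← hmain]
  exact ((List.take_prefix _ _).isInfix).trans (List.drop_suffix _ _).isInfix

lemma forall₂_concat {R : α → β → Prop} {w : List α} {ws : List β} {v : β}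
    (hf : List.Forall₂ R w (ws ++ [v])) :
    ∃ w' a, w = w' ++ [a] ∧ List.Forall₂ R w' ws ∧ R a v := by
  rw [← List.forall₂_reverse_iff, List.reverse_append] at hf
  simp only [List.reverse_singleton, List.singleton_append] at hf
  rw [List.forall₂_cons_right_iff] at hf
  obtain ⟨a, w'', hR, hf', hw⟩ := hf
  refine ⟨w''.reverse, a, ?_, ?_, hR⟩
  · rw [← List.reverse_reverse w, hw]
    simp
  · have := List.forall₂_reverse_iff.mpr hf'
    simpa using this

lemma forall₂_getElem? {R : α → β → Prop} {w : List α} {ws : List β}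
    (hf : List.Forall₂ R w ws) {i : ℕ} (hi : i < ws.length) :
    ∃ a B, w[i]? = some a ∧ ws[i]? = some B ∧ R a B := by
  have hlen := hf.length_eq
  have hi' : i < w.length := by omega
  refine ⟨w[i], ws[i], List.getElem?_eq_getElem hi', List.getElem?_eq_getElem hi, ?_⟩
  have := hf.get (i := i) hi' hi
  simpa using this

lemma flatten_le
    (h5 : ∀ (a : α) (u : List α), u ∈ h a → u.length ≤ 18) :
    ∀ {w : List α} {ws : List (List α)}, List.Forall₂ (fun a u => u ∈ h a) w ws →
      ws.flatten.length ≤ 18 * ws.length := by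
  intro w ws hf
  induction hf with
  | nil => simp
  | @cons a v w' ws' hv _ ih =>
      have := h5 a v hv
      simp only [List.flatten_cons, List.length_append, List.length_cons]
      omega

lemma copy_occ {t x r F : List α} (hF : t ++ (x ++ x) ++ r = F) {q : ℕ} {B : List α}
    (hq : t.length ≤ q) (hqB : q + B.length ≤ t.length + x.length) :
    (B <+: F.drop q ↔ B <+: F.drop (q + x.length)) := by
  have hFe : F = t ++ (x ++ (x ++ r)) := by rw [← hF]; simp [List.append_assoc]
  have e1 : F.drop q = x.drop (q - t.length) ++ (x ++ r) := by
    rw [hFe, List.drop_append, List.drop_eq_nil_of_le hq,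
      List.drop_append,
      Nat.sub_eq_zero_of_le (by omega : q - t.length ≤ x.length),
      List.drop_zero, List.nil_append]
  have e2 : F.drop (q + x.length) = x.drop (q - t.length) ++ r := by
    rw [hFe, List.drop_append,
      List.drop_eq_nil_of_le (by omega : t.length ≤ q + x.length), List.nil_append,
      List.drop_append,
      List.drop_eq_nil_of_le (by omega : x.length ≤ q + x.length - t.length),
      List.nil_append, List.drop_append]
    rw [show q + x.length - t.length - x.length = q - t.length from by omega]
    rw [show q - t.length - x.length = 0 from by omega, List.drop_zero]
  have hlen : B.length ≤ (x.drop (q - t.length)).length := by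
    simp only [List.length_drop]
    omega
  rw [e1, e2]
  constructor
  · intro hb
    exact (List.prefix_of_prefix_length_le hb (List.prefix_append _ _) hlen).trans
      (List.prefix_append _ _)
  · intro hb
    exact (List.prefix_of_prefix_length_le hb (List.prefix_append _ _) hlen).trans
      (List.prefix_append _ _)

lemma block_last {ws : List (List α)} {k q : ℕ} {B : List α} (hB : ws[k]? = some B)
    (h1 : S ws k ≤ q) (h2 : q < S ws (k+1)) :
    B.getLast? = ((ws.flatten.drop q).take (S ws (k+1) - q)).getLast? := by
  have hS : S ws (k+1) = S ws k + B.length := S_succ ws k hB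
  obtain ⟨z, hz⟩ := block_occ ws hB
  have e1 : ws.flatten.drop q = B.drop (q - S ws k) ++ z := by
    have : ws.flatten.drop q = (ws.flatten.drop (S ws k)).drop (q - S ws k) := by
      rw [List.drop_drop]
      congr 1
      omega
    rw [this, ← hz, List.drop_append,
      Nat.sub_eq_zero_of_le (by omega : q - S ws k ≤ B.length), List.drop_zero]
  have e2 : (ws.flatten.drop q).take (S ws (k+1) - q) = B.drop (q - S ws k) := by
    rw [e1]
    exact List.take_left' (by simp only [List.length_drop]; omega)
  rw [e2, getLast?_drop_of_lt (by omega)]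


end SqAux
theorem stmt6 {α : Type*} (h : α → Set (List α))
    (h1 : ∀ (a b c : α) (u v w : List α), u ∈ h a → v ∈ h b → w ∈ h c →
      ∀ x y : List α, x ≠ [] → y ≠ [] → u ++ v ≠ x ++ w ++ y)
    (h2 : ∀ (a b : α) (u v : List α), a ≠ b → u ∈ h a → v ∈ h b →
      ¬ (u <+: v ∧ u ≠ v))
    (h3 : ∀ (a b : α) (u v : List α), a ≠ b → u ∈ h a → v ∈ h b →
      u.getLast? ≠ v.getLast?)
    (h4 : ∀ w : List α, w.length ≤ 8 → SqFreeWord w →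
      ∀ ws : List (List α), List.Forall₂ (fun a u => u ∈ h a) w ws →
      ∀ x : List α, x ≠ [] → x.length ≤ 52 → ¬ (x ++ x) <:+: ws.flatten)
    (h5 : ∀ (a : α) (u : List α), u ∈ h a → u.length ≤ 18) :
    ∀ w : List α, SqFreeWord w → ∀ ws : List (List α),
      List.Forall₂ (fun a u => u ∈ h a) w ws → SqFreeWord ws.flatten := by
  open SqAux in
  suffices H : ∀ (N : ℕ) (w : List α) (ws : List (List α)), ws.length ≤ N → SqFreeWord w →
      List.Forall₂ (fun a u => u ∈ h a) w ws → SqFreeWord ws.flatten by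
    intro w hw ws hf
    exact H ws.length w ws le_rfl hw hf
  intro N
  induction N with
  | zero =>
      intro w ws hlen _ _ x hx hxx
      have hws : ws = [] := List.eq_nil_of_length_eq_zero (by omega)
      subst hws
      rw [List.flatten_nil, List.infix_nil] at hxx
      exact hx (List.append_eq_nil_iff.mp hxx).1
  | succ N IH =>
      intro w ws hlenN hw hf x hx hxx
      obtain ⟨t, r, hF⟩ := hxx
      -- basic facts
      have hL : 1 ≤ x.length := List.length_pos_iff.mpr hx
      have hlenF : ws.flatten.length = t.length + 2 * x.length + r.length := by
        have := congrArg List.length hF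
        simp only [List.length_append] at this
        omega
      have hflatne : ws.flatten ≠ [] := by
        intro h0
        rw [h0] at hlenF
        simp at hlenF
        omega
      -- all blocks are nonempty
      have hne : ∀ u ∈ ws, u ≠ [] := by
        by_contra hcon
        push_neg at hcon
        obtain ⟨u0, hu0mem, hu0⟩ := hcon
        obtain ⟨i, hi, hieq⟩ := List.getElem_of_mem hu0mem
        obtain ⟨b0, B0, hwi, hwsi, hR⟩ := SqAux.forall₂_getElem? hf hi
        have hBe : ws[i] = B0 := by
          rw [List.getElem?_eq_getElem hi] at hwsi
          exact Option.some.inj hwsi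
        have hb0 : ([] : List α) ∈ h b0 := by
          rw [← hu0, ← hieq, hBe]
          exact hR
        apply hflatne
        rw [List.flatten_eq_nil_iff]
        intro l hl
        by_contra hlne
        obtain ⟨j, hj, hjeq⟩ := List.getElem_of_mem hl
        obtain ⟨bj, Bj, hwj, hwsj, hRj⟩ := SqAux.forall₂_getElem? hf hj
        have hBje : ws[j] = Bj := by
          rw [List.getElem?_eq_getElem hj] at hwsj
          exact Option.some.inj hwsj
        have hlj : l ∈ h bj := by
          rw [← hjeq, hBje]
          exact hRj
        exact h1 bj bj b0 l l [] hlj hlj hb0 l l hlne hlne (by simp)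
      have hn1 : 1 ≤ ws.length := by
        rcases ws with _ | ⟨v, ws'⟩
        · exact absurd rfl hflatne
        · simp
      have hStop : SqAux.S ws ws.length = ws.flatten.length := SqAux.S_top ws le_rfl
      -- trim left
      by_cases hTL : SqAux.S ws 1 ≤ t.length
      · rcases ws with _ | ⟨v, ws'⟩
        · exact absurd rfl hflatne
        rw [List.forall₂_cons_right_iff] at hf
        obtain ⟨a, w', hv, hf', hwx⟩ := hf
        subst hwx
        have hS1 : SqAux.S (v :: ws') 1 = v.length := by
          simp [SqAux.S]
        rw [hS1] at hTL
        have hvt : v <+: t := by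
          have hp1 : v <+: (v :: ws').flatten := ⟨ws'.flatten, rfl⟩
          have hp2 : t <+: (v :: ws').flatten :=
            ⟨(x ++ x) ++ r, by rw [← hF]; simp [List.append_assoc]⟩
          exact List.prefix_of_prefix_length_le hp1 hp2 hTL
        obtain ⟨t', rfl⟩ := hvt
        have heq' : ws'.flatten = t' ++ (x ++ x) ++ r := by
          apply List.append_cancel_left (as := v)
          rw [show v ++ ws'.flatten = (v :: ws').flatten from rfl, ← hF]
          simp [List.append_assoc]
        have hw' : SqFreeWord w' := SqAux.sqfree_of_infix hw (show w' <:+ (a :: w') from ⟨[a], rfl⟩).isInfix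
        exact IH w' ws' (by simpa using hlenN) hw' hf' x hx ⟨t', r, heq'.symm⟩
      -- trim right
      by_cases hTR : ws.flatten.length ≤ SqAux.S ws (ws.length - 1) + r.length
      · rcases List.eq_nil_or_concat ws with rfl | ⟨ws', v, rfl⟩
        · exact absurd rfl hflatne
        rw [List.concat_eq_append] at *
        obtain ⟨w', a, rfl, hf', hva⟩ := SqAux.forall₂_concat hf
        have hSn1 : SqAux.S (ws' ++ [v]) ((ws' ++ [v]).length - 1) = ws'.flatten.length := by
          unfold SqAux.S
          rw [show (ws' ++ [v]).length - 1 = ws'.length from by simp, List.take_left]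
        have hFlen2 : (ws' ++ [v]).flatten.length = ws'.flatten.length + v.length := by
          simp
        rw [hSn1] at hTR
        have hvr : v <:+ r := by
          have hp1 : v <:+ (ws' ++ [v]).flatten := ⟨ws'.flatten, by simp⟩
          have hp2 : r <:+ (ws' ++ [v]).flatten := ⟨t ++ (x ++ x), by rw [← hF]⟩
          exact List.suffix_of_suffix_length_le hp1 hp2 (by omega)
        obtain ⟨r', rfl⟩ := hvr
        have heq' : ws'.flatten = t ++ (x ++ x) ++ r' := by
          apply List.append_cancel_right (bs := v)
          rw [show ws'.flatten ++ v = (ws' ++ [v]).flatten from by simp, ← hF]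
          simp [List.append_assoc]
        have hw' : SqFreeWord w' := SqAux.sqfree_of_infix hw (List.prefix_append _ _).isInfix
        exact IH w' ws' (by simp at hlenN; omega) hw' hf' x hx ⟨t, r', heq'.symm⟩
      -- main case
      push_neg at hTL hTR
      have hTR' : SqAux.S ws (ws.length - 1) < t.length + 2 * x.length := by omega
      have hblock : ∀ k, k < ws.length → ∃ a B, w[k]? = some a ∧ ws[k]? = some B ∧ B ∈ h a :=
        fun k hk => SqAux.forall₂_getElem? hf hk
      have hwlen : w.length = ws.length := hf.length_eq
      have hcopy : ∀ (q : ℕ) (B : List α), t.length ≤ q → q + B.length ≤ t.length + x.length →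
          (B <+: ws.flatten.drop q ↔ B <+: ws.flatten.drop (q + x.length)) :=
        fun q B hq hqB => SqAux.copy_occ hF hq hqB
      -- k0 and k1
      have hk0ex : ∃ k, t.length ≤ SqAux.S ws k := ⟨ws.length, by omega⟩
      set k0 := Nat.find hk0ex with hk0def
      have hk0 : t.length ≤ SqAux.S ws k0 := Nat.find_spec hk0ex
      have hk0min : ∀ j, j < k0 → SqAux.S ws j < t.length :=
        fun j hj => lt_of_not_ge (Nat.find_min hk0ex hj)
      have hk0n : k0 ≤ ws.length := Nat.find_min' hk0ex (by omega)
      set k1 := Nat.findGreatest (fun k => SqAux.S ws k ≤ t.length + x.length) ws.length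
        with hk1def
      have hk1 : SqAux.S ws k1 ≤ t.length + x.length :=
        Nat.findGreatest_spec (P := fun k => SqAux.S ws k ≤ t.length + x.length)
          (Nat.zero_le ws.length) (by simp [SqAux.S])
      have hk1max : ∀ j, k1 < j → j ≤ ws.length → t.length + x.length < SqAux.S ws j :=
        fun j hj1 hj2 => lt_of_not_ge
          (Nat.findGreatest_is_greatest (P := fun k => SqAux.S ws k ≤ t.length + x.length)
            hj1 hj2)
      have hk1n : k1 ≤ ws.length :=
        Nat.findGreatest_le (P := fun k => SqAux.S ws k ≤ t.length + x.length) ws.length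
      by_cases hFull : ∃ k, k < ws.length ∧ t.length ≤ SqAux.S ws k ∧
          SqAux.S ws (k+1) ≤ t.length + x.length
      · -- there is a full block inside the first copy of x: get a square in w
        obtain ⟨k, hkn, hkp, hks⟩ := hFull
        have hk0k : k0 ≤ k := Nat.find_min' hk0ex hkp
        have hk1k : k + 1 ≤ k1 := Nat.le_findGreatest (by omega) hks
        have hk01 : k0 < k1 := by omega
        have hSk0L : SqAux.S ws k0 ≤ t.length + x.length :=
          le_trans (le_of_lt (SqAux.S_strict ws hne hk01 hk1n)) hk1
        have hsync : ∀ j, k0 ≤ j → j < k1 → ∃ m, m < ws.length ∧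
            SqAux.S ws m = SqAux.S ws j + x.length ∧ ws[m]? = ws[j]? ∧ w[m]? = w[j]? := by
          intro j hj0 hj1
          obtain ⟨aj, Bj, hwj, hwsj, hBj⟩ := hblock j (by omega)
          have hSj : SqAux.S ws (j+1) = SqAux.S ws j + Bj.length := SqAux.S_succ ws j hwsj
          have h₁ : t.length ≤ SqAux.S ws j := le_trans hk0 (SqAux.S_mono ws hj0)
          have h₂ : SqAux.S ws (j+1) ≤ t.length + x.length :=
            le_trans (SqAux.S_mono ws hj1) hk1
          have hocc' : Bj <+: ws.flatten.drop (SqAux.S ws j + x.length) :=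
            (hcopy _ _ h₁ (by omega)).mp (SqAux.block_occ ws hwsj)
          obtain ⟨m, hmn, hmS, hmB, hmw⟩ :=
            SqAux.rigid h1 h3 hf hne hBj (hne Bj (List.mem_of_getElem? hwsj)) hocc'
          exact ⟨m, hmn, hmS, by rw [hmB, hwsj], by rw [hmw, hwj]⟩
        obtain ⟨m0, hm0n, hm0S, hm0B, hm0w⟩ := hsync k0 le_rfl hk01
        have hstep : ∀ d, k0 + d < k1 → m0 + d < ws.length ∧
            SqAux.S ws (m0 + d) = SqAux.S ws (k0 + d) + x.length ∧
            ws[m0+d]? = ws[k0+d]? ∧ w[m0+d]? = w[k0+d]? := by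
          intro d
          induction d with
          | zero => intro _; exact ⟨hm0n, hm0S, hm0B, hm0w⟩
          | succ d ihd =>
              intro hd
              obtain ⟨h₁, h₂, h₃, h₄⟩ := ihd (by omega)
              obtain ⟨m, hmn, hmS, hmB, hmw⟩ := hsync (k0 + (d+1)) (by omega) hd
              obtain ⟨ad, Bd, hwd, hwsd, hBd⟩ := hblock (k0 + d) (by omega)
              have hs1 : SqAux.S ws (k0 + d + 1) = SqAux.S ws (k0 + d) + Bd.length :=
                SqAux.S_succ ws _ hwsd
              have hs2 : SqAux.S ws (m0 + d + 1) = SqAux.S ws (m0 + d) + Bd.length :=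
                SqAux.S_succ ws _ (by rw [h₃, hwsd])
              have hmm : m = m0 + d + 1 := by
                apply SqAux.S_inj ws hne (by omega) (by omega)
                rw [hmS, hs2, h₂]
                rw [show k0 + (d+1) = k0 + d + 1 from rfl, hs1]
                omega
              subst hmm
              simp only [Nat.add_succ] at hmS hmB hmw hmn ⊢
              exact ⟨hmn, hmS, hmB, hmw⟩
        have hm0k0 : k0 < m0 := by
          by_contra hc
          push_neg at hc
          have := SqAux.S_mono ws hc
          omega
        have hm0k1 : m0 ≤ k1 + 1 := by
          by_contra hc
          push_neg at hc
          have hk11n : k1 + 1 < ws.length := by omega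
          obtain ⟨a', B', hw', hws', hB'⟩ := hblock (k1+1) hk11n
          have hB'len : 1 ≤ B'.length := by
            have := hne B' (List.mem_of_getElem? hws')
            exact List.length_pos_iff.mpr this
          have hs1 : SqAux.S ws (k1+1+1) = SqAux.S ws (k1+1) + B'.length :=
            SqAux.S_succ ws _ hws'
          have hgt : t.length + x.length < SqAux.S ws (k1+1) := hk1max _ (by omega) (by omega)
          have hle : SqAux.S ws (k1+1+1) ≤ SqAux.S ws m0 := SqAux.S_mono ws (by omega)
          have heq2 : (SqAux.S ws (k1+1) - x.length) + x.length = SqAux.S ws (k1+1) := by omega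
          have hocc'' : B' <+: ws.flatten.drop (SqAux.S ws (k1+1) - x.length) := by
            rw [hcopy _ _ (by omega) (by omega)]
            rw [heq2]
            exact SqAux.block_occ ws hws'
          obtain ⟨m', hm'n, hm'S, hm'B, hm'w⟩ :=
            SqAux.rigid h1 h3 hf hne hB' (hne B' (List.mem_of_getElem? hws')) hocc''
          have hm'k0 : k0 ≤ m' := by
            by_contra hc2
            push_neg at hc2
            have := hk0min m' hc2
            omega
          have hs2 : SqAux.S ws (m'+1) = SqAux.S ws m' + B'.length :=
            SqAux.S_succ ws _ hm'B
          have hmono : SqAux.S ws k0 ≤ SqAux.S ws m' := SqAux.S_mono ws hm'k0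
          have hstrict : SqAux.S ws m' < SqAux.S ws (m'+1) := by omega
          omega
        rcases Nat.lt_or_ge m0 (k1+1) with hcase | hcase
        · -- overlapping squares in w
          have hd1 : 1 ≤ m0 - k0 := by omega
          refine absurd hw (SqAux.not_sqfree_of_periodic (i := k0) (d := m0 - k0) hd1 ?_ ?_)
          · have := (hstep (m0 - k0 - 1) (by omega)).1
            omega
          · intro s hs
            have h₁ : k0 + s < k1 := by omega
            have := (hstep s h₁).2.2.2
            rw [show k0 + (m0 - k0) + s = m0 + s from by omega]
            exact this.symm
        · -- m0 = k1 + 1 : use the last-letter condition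
          have hm0e : m0 = k1 + 1 := by omega
          have hSm0' : SqAux.S ws (k1+1) = SqAux.S ws k0 + x.length := by
            rw [← hm0e]; exact hm0S
          have hpk0 : t.length < SqAux.S ws k0 := by
            have := hk1max (k1+1) (by omega) (by omega)
            omega
          have hk0pos : 1 ≤ k0 := by
            rcases Nat.eq_zero_or_pos k0 with h0 | h0
            · rw [h0, SqAux.S_zero] at hpk0; omega
            · exact h0
          have hprev : SqAux.S ws (k0 - 1) < t.length := hk0min _ (by omega)
          obtain ⟨aL, BL, hwL, hwsL, hBL⟩ := hblock (k0-1) (by omega)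
          obtain ⟨aR, BR, hwR, hwsR, hBR⟩ := hblock k1 (by omega)
          have hSL : SqAux.S ws (k0-1+1) = SqAux.S ws (k0-1) + BL.length :=
            SqAux.S_succ ws _ hwsL
          have hk0e : k0 - 1 + 1 = k0 := by omega
          rw [hk0e] at hSL
          have hSR : SqAux.S ws (k1+1) = SqAux.S ws k1 + BR.length := SqAux.S_succ ws _ hwsR
          -- getLast? equalities
          have hlast1 : BL.getLast? =
              ((ws.flatten.drop t.length).take (SqAux.S ws k0 - t.length)).getLast? := by
            have := SqAux.block_last hwsL (le_of_lt hprev) (by rw [hk0e]; exact hpk0)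
            rw [hk0e] at this
            exact this
          have hlast2 : BR.getLast? = ((ws.flatten.drop (t.length + x.length)).take
              (SqAux.S ws (k1+1) - (t.length + x.length))).getLast? := by
            exact SqAux.block_last hwsR hk1 (hk1max (k1+1) (by omega) (by omega))
          have hδ : SqAux.S ws (k1+1) - (t.length + x.length) = SqAux.S ws k0 - t.length := by
            omega
          have e1 : ws.flatten.drop t.length = x ++ (x ++ r) := by
            rw [← hF]
            rw [show t ++ (x ++ x) ++ r = t ++ (x ++ (x ++ r)) from by simp [List.append_assoc]]
            exact List.drop_left
          have e2 : ws.flatten.drop (t.length + x.length) = x ++ r := by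
            rw [← hF]
            rw [show t ++ (x ++ x) ++ r = (t ++ x) ++ (x ++ r) from by simp [List.append_assoc]]
            exact List.drop_left' (by simp)
          have htake : (ws.flatten.drop t.length).take (SqAux.S ws k0 - t.length) =
              (ws.flatten.drop (t.length + x.length)).take (SqAux.S ws k0 - t.length) := by
            rw [e1, e2, List.take_append_of_le_length (by simp; omega),
              List.take_append_of_le_length (by simp; omega)]
          have hacLR : aL = aR := by
            by_contra hne2
            apply h3 aL aR BL BR hne2 hBL hBR
            rw [hlast1, hlast2, hδ, htake]
          -- now build the square in w
          refine absurd hw (SqAux.not_sqfree_of_periodic (i := k0 - 1) (d := k1 - k0 + 1)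
            (by omega) ?_ ?_)
          · have := (hstep (k1 - k0 - 1) (by omega)).1
            omega
          · intro s hs
            rcases Nat.eq_zero_or_pos s with rfl | hspos
            · rw [show k0 - 1 + (k1 - k0 + 1) + 0 = k1 from by omega,
                show k0 - 1 + 0 = k0 - 1 from by omega, hwL, hwR, hacLR]
            · have h₁ : k0 + (s-1) < k1 := by omega
              have := (hstep (s-1) h₁).2.2.2
              rw [show k0 - 1 + s = k0 + (s - 1) from by omega,
                show k0 - 1 + (k1 - k0 + 1) + s = m0 + (s - 1) from by omega]
              exact this.symm
      · -- no full block inside the first copy : the square sits inside ≤ 3 blocks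
        have hn3 : ws.length ≤ 3 := by
          by_contra hn4
          push_neg at hn4
          have hS3 : SqAux.S ws 3 < t.length + 2 * x.length :=
            lt_of_le_of_lt (SqAux.S_mono ws (by omega : 3 ≤ ws.length - 1)) hTR'
          by_cases hS2 : SqAux.S ws 2 ≤ t.length + x.length
          · exact hFull ⟨1, by omega, le_of_lt hTL, hS2⟩
          · push_neg at hS2
            obtain ⟨a2, B2, hw2, hws2, hB2⟩ := hblock 2 (by omega)
            have hS2' : SqAux.S ws 3 = SqAux.S ws 2 + B2.length := by
              have := SqAux.S_succ ws 2 hws2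
              norm_num at this
              exact this
            have heq3 : (SqAux.S ws 2 - x.length) + x.length = SqAux.S ws 2 := by omega
            have hocc2 : B2 <+: ws.flatten.drop (SqAux.S ws 2 - x.length) := by
              rw [hcopy _ _ (by omega) (by omega)]
              rw [heq3]
              exact SqAux.block_occ ws hws2
            obtain ⟨m, hmn, hmS, hmB, hmw⟩ :=
              SqAux.rigid h1 h3 hf hne hB2 (hne B2 (List.mem_of_getElem? hws2)) hocc2
            have hSm1 : SqAux.S ws (m+1) = SqAux.S ws m + B2.length :=
              SqAux.S_succ ws _ hmB
            exact hFull ⟨m, hmn, by omega, by omega⟩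
        have hflen : ws.flatten.length ≤ 18 * ws.length := SqAux.flatten_le h5 hf
        have hL52 : x.length ≤ 52 := by omega
        exact h4 w (by omega) hw ws hf x hx hL52 ⟨t, r, hF⟩
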